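/- Every completely simple semigroup is equidivisible; moreover, for every u,v,x,y in a completely simple semigroup S with uv = xy, there exist t₁,t₂ in S¹ such that ut₁ = x, t₁y = v, u = xt₂, and y = t₂v. -/
import Mathlib


variable {S : Type*} [Semigroup S]

/-- A (two-sided) ideal of a semigroup. -/
def IsIdeal (I : Set S) : Prop :=
  I.Nonempty ∧ ∀ s ∈ I, ∀ x : S, x * s ∈ I ∧ s * x ∈ I

/-- A left ideal of a semigroup. -/
def IsLeftIdeal (L : Set S) : Prop :=
  L.Nonempty ∧ ∀ s ∈ L, ∀ x : S, x * s ∈ L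

/-- A right ideal of a semigroup. -/
def IsRightIdeal (R : Set S) : Prop :=
  R.Nonempty ∧ ∀ s ∈ R, ∀ x : S, s * x ∈ R

/-- A semigroup is completely simple if it is simple and has a minimal left ideal and a
minimal right ideal. -/
def CompletelySimple (S : Type*) [Semigroup S] : Prop :=
  (∀ I : Set S, IsIdeal I → I = Set.univ) ∧
  (∃ L : Set S, IsLeftIdeal L ∧ ∀ L' : Set S, IsLeftIdeal L' → L' ⊆ L → L' = L) ∧
  (∃ R : Set S, IsRightIdeal R ∧ ∀ R' : Set S, IsRightIdeal R' → R' ⊆ R → R' = R)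

lemma key_right (hS : CompletelySimple S) (a b : S) : ∃ s : S, a = a * b * s := by
  obtain ⟨hsimp, -, R₀, hR₀, hmin⟩ := hS
  have hKideal : IsIdeal (R₀ ∪ {z | ∃ c r, r ∈ R₀ ∧ z = c * r}) := by
    constructor
    · exact hR₀.1.mono Set.subset_union_left
    · rintro s hs x
      rcases hs with hs | ⟨c, r, hr, rfl⟩
      · exact ⟨Or.inr ⟨x, s, hs, rfl⟩, Or.inl (hR₀.2 s hs x)⟩
      · exact ⟨Or.inr ⟨x * c, r, hr, (mul_assoc _ _ _).symm⟩,
          Or.inr ⟨c, r * x, hR₀.2 r hr x, mul_assoc _ _ _⟩⟩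
  have haK : a ∈ R₀ ∪ {z | ∃ c r, r ∈ R₀ ∧ z = c * r} := by
    rw [hsimp _ hKideal]; exact Set.mem_univ a
  rcases haK with ha | ⟨c, r, hr, rfl⟩
  · have hTideal : IsRightIdeal {r' | r' ∈ R₀ ∧ ∃ s, r' = a * b * s} := by
      constructor
      · exact ⟨a * b * a, hR₀.2 _ (hR₀.2 a ha b) a, a, rfl⟩
      · rintro s ⟨hs, t, rfl⟩ z
        exact ⟨hR₀.2 _ hs z, t * z, mul_assoc _ _ _⟩
    have hT := hmin _ hTideal (fun z hz => hz.1)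
    have : a ∈ {r' | r' ∈ R₀ ∧ ∃ s, r' = a * b * s} := by rw [hT]; exact ha
    exact this.2
  · have hTideal : IsRightIdeal {r' | r' ∈ R₀ ∧ ∃ s, c * r' = (c * r) * b * s} := by
      constructor
      · refine ⟨r * (b * (c * r)), hR₀.2 _ hr _, c * r, ?_⟩
        simp only [mul_assoc]
      · rintro s ⟨hs, t, hts⟩ z
        refine ⟨hR₀.2 _ hs z, t * z, ?_⟩
        calc c * (s * z) = (c * s) * z := (mul_assoc _ _ _).symm
          _ = ((c * r) * b * t) * z := by rw [hts]
          _ = (c * r) * b * (t * z) := mul_assoc _ _ _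
    have hT := hmin _ hTideal (fun z hz => hz.1)
    have : r ∈ {r' | r' ∈ R₀ ∧ ∃ s, c * r' = (c * r) * b * s} := by rw [hT]; exact hr
    exact this.2

lemma key_left (hS : CompletelySimple S) (a b : S) : ∃ s : S, b = s * (a * b) := by
  obtain ⟨hsimp, ⟨L₀, hL₀, hmin⟩, -⟩ := hS
  have hKideal : IsIdeal (L₀ ∪ {z | ∃ l c, l ∈ L₀ ∧ z = l * c}) := by
    constructor
    · exact hL₀.1.mono Set.subset_union_left
    · rintro s hs x
      rcases hs with hs | ⟨l, c, hl, rfl⟩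
      · exact ⟨Or.inl (hL₀.2 s hs x), Or.inr ⟨s, x, hs, rfl⟩⟩
      · exact ⟨Or.inr ⟨x * l, c, hL₀.2 l hl x, (mul_assoc _ _ _).symm⟩,
          Or.inr ⟨l, c * x, hl, mul_assoc _ _ _⟩⟩
  have hbK : b ∈ L₀ ∪ {z | ∃ l c, l ∈ L₀ ∧ z = l * c} := by
    rw [hsimp _ hKideal]; exact Set.mem_univ b
  rcases hbK with hb | ⟨l, c, hl, rfl⟩
  · have hTideal : IsLeftIdeal {l' | l' ∈ L₀ ∧ ∃ s, l' = s * (a * b)} := by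
      constructor
      · exact ⟨b * (a * b), hL₀.2 _ (hL₀.2 b hb a) b, b, rfl⟩
      · rintro s ⟨hs, t, rfl⟩ z
        exact ⟨hL₀.2 _ hs z, z * t, (mul_assoc _ _ _).symm⟩
    have hT := hmin _ hTideal (fun z hz => hz.1)
    have : b ∈ {l' | l' ∈ L₀ ∧ ∃ s, l' = s * (a * b)} := by rw [hT]; exact hb
    exact this.2
  · have hTideal : IsLeftIdeal {l' | l' ∈ L₀ ∧ ∃ s, l' * c = s * (a * (l * c))} := by
      constructor
      · refine ⟨((l * c) * a) * l, hL₀.2 _ hl _, l * c, ?_⟩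
        simp only [mul_assoc]
      · rintro s ⟨hs, t, hts⟩ z
        refine ⟨hL₀.2 _ hs z, z * t, ?_⟩
        calc (z * s) * c = z * (s * c) := mul_assoc _ _ _
          _ = z * (t * (a * (l * c))) := by rw [hts]
          _ = (z * t) * (a * (l * c)) := (mul_assoc _ _ _).symm
    have hT := hmin _ hTideal (fun z hz => hz.1)
    have : l ∈ {l' | l' ∈ L₀ ∧ ∃ s, l' * c = s * (a * (l * c))} := by rw [hT]; exact hl
    exact this.2

lemma regular_of_completelySimple (hS : CompletelySimple S) (w : S) :
    ∃ t : S, w * t * w = w := by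
  obtain ⟨t, ht⟩ := key_right hS w w
  obtain ⟨s, hs⟩ := key_left hS w w
  refine ⟨t, ?_⟩
  have hwt : w * t = s * w := by
    calc w * t = (s * (w * w)) * t := by rw [← hs]
      _ = s * (w * w * t) := by simp only [mul_assoc]
      _ = s * w := by rw [← ht]
  calc w * t * w = (s * w) * w := by rw [hwt]
    _ = s * (w * w) := mul_assoc _ _ _
    _ = w := hs.symm

/-- Every completely simple semigroup is equidivisible; moreover the factorizations are
related in both directions. -/
theorem completelySimple_equidivisible (hS : CompletelySimple S)
    (u v x y : S) (h : u * v = x * y) :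
    ((∃ t : WithOne S, (u : WithOne S) * t = (x : WithOne S) ∧
        (v : WithOne S) = t * (y : WithOne S)) ∨
      (∃ t : WithOne S, (x : WithOne S) * t = (u : WithOne S) ∧
        (y : WithOne S) = t * (v : WithOne S))) ∧
    (∃ t₁ t₂ : WithOne S, (u : WithOne S) * t₁ = (x : WithOne S) ∧
      t₁ * (y : WithOne S) = (v : WithOne S) ∧
      (u : WithOne S) = (x : WithOne S) * t₂ ∧ (y : WithOne S) = t₂ * (v : WithOne S)) := by
  obtain ⟨w', hw'⟩ := regular_of_completelySimple hS (u * v)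
  obtain ⟨s₁, hx⟩ := key_right hS x y
  rw [← h] at hx
  obtain ⟨s₂, hu⟩ := key_right hS u v
  obtain ⟨s₃, hv⟩ := key_left hS u v
  obtain ⟨s₄, hy⟩ := key_left hS x y
  rw [← h] at hy
  have habs : ∀ z : S, (u * v) * w' * ((u * v) * z) = (u * v) * z := by
    intro z
    calc (u * v) * w' * ((u * v) * z) = ((u * v) * w' * (u * v)) * z := by
          simp only [mul_assoc]
      _ = (u * v) * z := by rw [hw']
  have habs' : ∀ z : S, (z * (u * v)) * (w' * (u * v)) = z * (u * v) := by
    intro z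
    calc (z * (u * v)) * (w' * (u * v)) = z * ((u * v) * w' * (u * v)) := by
          simp only [mul_assoc]
      _ = z * (u * v) := by rw [hw']
  have h1 : u * (v * (w' * x)) = x := by
    have e : u * (v * (w' * x)) = (u * v) * w' * x := by simp only [mul_assoc]
    rw [e, hx]; exact habs s₁
  have h2 : (v * (w' * x)) * y = v := by
    have e : (v * (w' * x)) * y = v * (w' * (x * y)) := by simp only [mul_assoc]
    rw [e, ← h]
    nth_rewrite 1 [hv]
    rw [habs' s₃]
    exact hv.symm
  have h3 : x * (y * (w' * u)) = u := by
    have e : x * (y * (w' * u)) = (x * y) * w' * u := by simp only [mul_assoc]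
    rw [e, ← h]
    nth_rewrite 2 [hu]
    rw [habs s₂]
    exact hu.symm
  have h4 : (y * (w' * u)) * v = y := by
    have e : (y * (w' * u)) * v = y * (w' * (u * v)) := by simp only [mul_assoc]
    rw [e]
    nth_rewrite 1 [hy]
    rw [habs' s₄]
    exact hy.symm
  constructor
  · left
    refine ⟨(↑(v * (w' * x)) : WithOne S), ?_, ?_⟩
    · rw [← WithOne.coe_mul, h1]
    · rw [← WithOne.coe_mul, h2]
  · refine ⟨(↑(v * (w' * x)) : WithOne S), (↑(y * (w' * u)) : WithOne S), ?_, ?_, ?_, ?_⟩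
    · rw [← WithOne.coe_mul, h1]
    · rw [← WithOne.coe_mul, h2]
    · rw [← WithOne.coe_mul, h3]
    · rw [← WithOne.coe_mul, h4]
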